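/- Let d be a squarefree integer with d ∈ {-26, -3, -1, 1, 3, 26} excluded, i.e., d ∉ {-26,-3,-1,1,3,26}. If x₀ ∈ ℚ̄ is an x-coordinate of a point of order 4 on E: y² = (x-8)(x-9)(x+18) and f₁(x) = (x-8)(x-9)(x+18), then d·f₁(x₀) is not a square in ℚ(x₀). -/

import Mathlib

open WeierstrassCurve.Affine

/-- The elliptic curve `E : y² = (x-8)(x-9)(x+18)`, i.e. `y² = x³ + x² - 234x + 1296`,
base-changed to the algebraic closure of `ℚ`. -/
noncomputable def E17 : WeierstrassCurve.Affine (AlgebraicClosure ℚ) :=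
  { a₁ := 0, a₂ := 1, a₃ := 0, a₄ := -234, a₆ := 1296 }

section Auxiliary

open Polynomial

lemma nat_squarefree_of (n : ℕ) (h0 : n ≠ 0) (H : ∀ x, x ≤ n → x*x ∣ n → x = 1) :
    Squarefree n := fun x hx =>
  (H x (Nat.le_of_dvd (Nat.pos_of_ne_zero h0) ((dvd_mul_right x x).trans hx)) hx) ▸ isUnit_one

lemma int_sf (n : ℤ) (h : Squarefree n.natAbs) : Squarefree n := Int.squarefree_natAbs.mp h

lemma sf1 : Squarefree (1:ℤ) := int_sf 1 (nat_squarefree_of 1 (by norm_num) (by decide))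
lemma sf3 : Squarefree (3:ℤ) := int_sf 3 (nat_squarefree_of 3 (by norm_num) (by decide))
lemma sfm3 : Squarefree (-3:ℤ) := int_sf (-3) (nat_squarefree_of 3 (by norm_num) (by decide))
lemma sfm1 : Squarefree (-1:ℤ) := int_sf (-1) (nat_squarefree_of 1 (by norm_num) (by decide))
lemma sf26 : Squarefree (26:ℤ) := int_sf 26 (nat_squarefree_of 26 (by norm_num) (by decide))
lemma sfm26 : Squarefree (-26:ℤ) := int_sf (-26) (nat_squarefree_of 26 (by norm_num) (by decide))
lemma sf78 : Squarefree (78:ℤ) := int_sf 78 (nat_squarefree_of 78 (by norm_num) (by decide))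

lemma sq_int (r : ℚ) (n : ℤ) (h : r^2 = (n:ℚ)) : ∃ m : ℤ, (m:ℚ) = r := by
  have hint : IsIntegral ℤ r := by
    refine ⟨Polynomial.X^2 - Polynomial.C n, ?_, ?_⟩
    · exact Polynomial.monic_X_pow_sub_C n (by norm_num)
    · simp only [Polynomial.eval₂_sub, Polynomial.eval₂_pow, Polynomial.eval₂_X,
        Polynomial.eval₂_C, Int.coe_castRingHom]
      rw [h]; simp [algebraMap_int_eq]
  obtain ⟨m, hm⟩ := IsIntegrallyClosed.isIntegral_iff.mp hint
  exact ⟨m, hm⟩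

lemma key_lemma (c d : ℤ) (hc : Squarefree c) (hd : Squarefree d) (b : ℚ)
    (h : (d:ℚ) = (c:ℚ) * b^2) : d = c := by
  obtain ⟨m, hm⟩ := sq_int ((c:ℚ)*b) (c*d) (by push_cast; linear_combination (-(c:ℚ)) * h)
  have hm2 : m^2 = c * d := by
    have h3 : ((m:ℚ))^2 = ((c*d:ℤ):ℚ) := by
      rw [hm]; push_cast; linear_combination (-(c:ℚ)) * h
    exact_mod_cast h3
  have hcm : c ∣ m := hc.isRadical 2 m ⟨d, by rw [← hm2]⟩
  obtain ⟨k, hk⟩ := hcm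
  have hc0 : (c:ℤ) ≠ 0 := hc.ne_zero
  have hdk : d = c * k^2 := by
    have h2 : c * (c * k^2) = c * d := by rw [← hm2, hk]; ring
    exact (mul_left_cancel₀ hc0 h2).symm
  have hku : IsUnit k := hd k ⟨c, by rw [hdk]; ring⟩
  rcases Int.isUnit_iff.mp hku with rfl | rfl
  · simpa using hdk
  · simpa using hdk

lemma mem_decomp {K : Type*} [Field K] [Algebra ℚ K] (x : K) (c₁ c₀ : ℚ)
    (hx : x^2 = algebraMap ℚ K c₁ * x + algebraMap ℚ K c₀) (z : K)
    (hz : z ∈ IntermediateField.adjoin ℚ {x}) :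
    ∃ a b : ℚ, z = algebraMap ℚ K a + algebraMap ℚ K b * x := by
  set m : ℚ[X] := X^2 - (C c₁ * X + C c₀) with hm
  have hmonic : m.Monic := by
    rw [hm]
    exact Polynomial.monic_X_pow_sub (n := 2)
      (lt_of_le_of_lt Polynomial.degree_linear_le (by norm_num))
  have hdeg : m.degree = 2 := by
    rw [hm]; compute_degree!
  have hint : IsIntegral ℚ x := by
    refine ⟨m, hmonic, ?_⟩
    simp only [hm, eval₂_sub, eval₂_add, eval₂_mul, eval₂_pow, eval₂_X, eval₂_C]
    rw [hx]; ring
  have hz' : z ∈ Algebra.adjoin ℚ {x} := by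
    rw [← IntermediateField.adjoin_simple_toSubalgebra_of_isAlgebraic hint.isAlgebraic] at *
    exact hz
  rw [Algebra.adjoin_singleton_eq_range_aeval] at hz'
  obtain ⟨p, hp⟩ := hz'
  have hzr : z = aeval x (p %ₘ m) := by
    conv_lhs => rw [← hp, ← modByMonic_add_div p m]
    have hmx : aeval x m = 0 := by
      simp only [hm, map_sub, map_add, map_mul, map_pow, aeval_X, aeval_C]
      rw [hx]; ring
    simp only [map_add, map_mul, AlgHom.toRingHom_eq_coe, RingHom.coe_coe, hmx, zero_mul, add_zero]
  have hdlt : (p %ₘ m).degree ≤ 1 := by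
    have := degree_modByMonic_lt p hmonic
    rw [hdeg] at this
    exact Order.le_of_lt_succ (by exact_mod_cast this)
  refine ⟨(p %ₘ m).coeff 0, (p %ₘ m).coeff 1, ?_⟩
  rw [hzr]
  conv_lhs => rw [eq_X_add_C_of_degree_le_one hdlt]
  simp only [map_add, map_mul, aeval_X, aeval_C]
  ring

lemma lin_indep (c₁ c₀ : ℚ) (hnr : ∀ r : ℚ, r^2 ≠ c₁*r + c₀) (x : AlgebraicClosure ℚ)
    (hx : x^2 = (c₁ : AlgebraicClosure ℚ)*x + (c₀ : AlgebraicClosure ℚ)) (u v : ℚ)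
    (huv : (u : AlgebraicClosure ℚ) + (v : AlgebraicClosure ℚ)*x = 0) : u = 0 ∧ v = 0 := by
  by_cases hv : v = 0
  · subst hv
    push_cast at huv
    simp only [zero_mul, add_zero] at huv
    exact ⟨by exact_mod_cast huv, rfl⟩
  · exfalso
    have hvne : (v : AlgebraicClosure ℚ) ≠ 0 := by exact_mod_cast hv
    have hxval : x = ((-u/v : ℚ) : AlgebraicClosure ℚ) := by
      push_cast
      field_simp
      linear_combination huv
    rw [hxval] at hx
    apply hnr (-u/v)
    exact_mod_cast hx

end Auxiliary

open Classical in
/-- If `d` is a squarefree integer with `d ∉ {-26,-3,-1,1,3,26}` and `x₀ ∈ ℚ̄` is the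
`x`-coordinate of a point of order 4 on `E : y² = (x-8)(x-9)(x+18)`, then
`d·f₁(x₀)` is not a square in `ℚ(x₀)`, where `f₁(x) = (x-8)(x-9)(x+18)`. -/
theorem stmt17 (d : ℤ) (hd : Squarefree d) (hdn : d ∉ ({-26, -3, -1, 1, 3, 26} : Set ℤ))
    (x₀ : AlgebraicClosure ℚ)
    (h4 : ∃ (y₀ : AlgebraicClosure ℚ) (h : E17.Nonsingular x₀ y₀),
      (4 : ℕ) • Point.some x₀ y₀ h = (0 : E17.Point) ∧
      (2 : ℕ) • Point.some x₀ y₀ h ≠ (0 : E17.Point)) :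
    ¬ ∃ z : (IntermediateField.adjoin ℚ {x₀} : IntermediateField ℚ (AlgebraicClosure ℚ)),
      (z : AlgebraicClosure ℚ) ^ 2 = (d : AlgebraicClosure ℚ) *
        ((x₀ - 8) * (x₀ - 9) * (x₀ + 18)) := by
  obtain ⟨y₀, h, h40, h20⟩ := h4
  rintro ⟨z, hz⟩
  -- Part A: x₀ satisfies one of three quadratics
  have ha1 : E17.a₁ = 0 := rfl
  have ha2 : E17.a₂ = 1 := rfl
  have ha3 : E17.a₃ = 0 := rfl
  have ha4 : E17.a₄ = -234 := rfl
  have ha6 : E17.a₆ = 1296 := rfl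
  have negY_eq : ∀ x y : AlgebraicClosure ℚ, E17.negY x y = -y := by
    intro x y; rw [WeierstrassCurve.Affine.negY, ha1, ha3]; ring
  have hy : y₀ ≠ E17.negY x₀ y₀ := by
    intro hcon
    exact h20 (by rw [two_nsmul]; exact Point.add_self_of_Y_eq hcon)
  have hy0 : y₀ ≠ 0 := by
    intro h0; apply hy; rw [negY_eq, h0, neg_zero]
  set ℓ := E17.slope x₀ x₀ y₀ y₀ with hldef
  have hQ := nonsingular_add h h (fun hxy => hy hxy.right)
  have hPP : Point.some _ _ h + Point.some _ _ h = Point.some _ _ hQ := Point.add_self_of_Y_ne hy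
  have h22 : (2:ℕ) • ((2:ℕ) • Point.some _ _ h) = 0 := by
    rw [smul_smul]; norm_num; exact h40
  rw [two_nsmul, two_nsmul, hPP] at h22
  have hyQ : E17.addY x₀ x₀ y₀ ℓ = E17.negY (E17.addX x₀ x₀ ℓ) (E17.addY x₀ x₀ y₀ ℓ) := by
    by_contra hne
    rw [Point.add_self_of_Y_ne hne] at h22
    exact Point.some_ne_zero _ h22
  have hy1 : E17.addY x₀ x₀ y₀ ℓ = 0 := by
    rw [negY_eq] at hyQ
    have h2 : (2 : AlgebraicClosure ℚ) * E17.addY x₀ x₀ y₀ ℓ = 0 := by linear_combination hyQ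
    rcases mul_eq_zero.mp h2 with h' | h'
    · exact absurd h' two_ne_zero
    · exact h'
  have hsl : ℓ = (3*x₀^2 + 2*x₀ - 234) / (2*y₀) := by
    rw [hldef, slope_of_Y_ne rfl hy, ha1, ha2, ha4, negY_eq]
    ring_nf
  have h2y : (2:AlgebraicClosure ℚ)*y₀ ≠ 0 := mul_ne_zero two_ne_zero hy0
  have hl : ℓ * (2*y₀) = 3*x₀^2 + 2*x₀ - 234 := by
    rw [hsl]; field_simp
  have heq : y₀^2 = x₀^3 + x₀^2 - 234*x₀ + 1296 := by
    have he := (E17.equation_iff x₀ y₀).mp h.1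
    rw [ha1, ha2, ha3, ha4, ha6] at he
    linear_combination he
  have hx1 : E17.addX x₀ x₀ ℓ = ℓ^2 - 1 - 2*x₀ := by
    rw [WeierstrassCurve.Affine.addX, ha1, ha2]; ring
  have hcube : ((E17.addX x₀ x₀ ℓ) - 8) *
      (((E17.addX x₀ x₀ ℓ) - 9) * ((E17.addX x₀ x₀ ℓ) + 18)) = 0 := by
    have he := (E17.equation_iff _ _).mp hQ.1
    rw [hy1, ha1, ha2, ha3, ha4, ha6] at he
    linear_combination -he
  set x₁ := E17.addX x₀ x₀ ℓ with hx1def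
  have hkey : (3*x₀^2 + 2*x₀ - 234)^2
      = 4*(x₀^3 + x₀^2 - 234*x₀ + 1296)*(x₁ + 1 + 2*x₀) := by
    linear_combination (-(3*x₀^2+2*x₀-234) - 2*y₀*ℓ) * hl + 4*ℓ^2*heq -
      4*(x₀^3 + x₀^2 - 234*x₀ + 1296)*hx1
  -- Part B/C: in each case, decompose z and derive a contradiction
  rcases mul_eq_zero.mp hcube with h8 | h9
  · -- x₁ = 8 : x₀² = 16x₀ - 90
    have hx8 : x₁ = 8 := by linear_combination h8
    have hq : (x₀^2 - 16*x₀ + 90)^2 = 0 := by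
      linear_combination hkey + 4*(x₀^3 + x₀^2 - 234*x₀ + 1296)*hx8
    have hx : x₀^2 = (16:ℚ)*x₀ + ((-90:ℚ) : AlgebraicClosure ℚ) := by
      have h0 := (pow_eq_zero_iff two_ne_zero).mp hq
      push_cast
      linear_combination h0
    have hnr : ∀ r : ℚ, r^2 ≠ 16*r + (-90) := by
      intro r hr; nlinarith [sq_nonneg (r-8)]
    obtain ⟨a, b, hab⟩ := mem_decomp x₀ 16 (-90)
      (by rw [eq_ratCast, eq_ratCast]; exact hx) (z : AlgebraicClosure ℚ) z.2
    rw [eq_ratCast, eq_ratCast] at hab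
    rw [hab] at hz
    have huv : ((a^2 - 90*b^2 + 234*(d:ℚ) : ℚ) : AlgebraicClosure ℚ) +
        ((2*a*b + 16*b^2 + 52*(d:ℚ) : ℚ) : AlgebraicClosure ℚ) * x₀ = 0 := by
      push_cast at hx ⊢
      linear_combination hz - ((b:AlgebraicClosure ℚ)^2 - (d:AlgebraicClosure ℚ)*(x₀+17))*hx
    obtain ⟨hu, hv⟩ := lin_indep 16 (-90) hnr x₀ hx _ _ huv
    have hfact : (a - 18*b)*(a + 9*b) = 0 := by linear_combination hu - (9/2)*hv
    rcases mul_eq_zero.mp hfact with ha | ha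
    · have hdb : (d:ℚ) = ((-1:ℤ):ℚ) * b^2 := by
        push_cast; linear_combination (1/52)*hv - (b/26)*ha
      have hdd := key_lemma (-1) d sfm1 hd b hdb
      exact hdn (by rw [hdd]; simp)
    · have hdb : (d:ℚ) = ((26:ℤ):ℚ) * (b/26)^2 := by
        push_cast; linear_combination (1/52)*hv - (b/26)*ha
      have hdd := key_lemma 26 d sf26 hd (b/26) hdb
      exact hdn (by rw [hdd]; simp)
  rcases mul_eq_zero.mp h9 with h9' | h18
  · -- x₁ = 9 : x₀² = 18x₀ - 54
    have hx9 : x₁ = 9 := by linear_combination h9'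
    have hq : (x₀^2 - 18*x₀ + 54)^2 = 0 := by
      linear_combination hkey + 4*(x₀^3 + x₀^2 - 234*x₀ + 1296)*hx9
    have hx : x₀^2 = (18:ℚ)*x₀ + ((-54:ℚ) : AlgebraicClosure ℚ) := by
      have h0 := (pow_eq_zero_iff two_ne_zero).mp hq
      push_cast
      linear_combination h0
    have hnr : ∀ r : ℚ, r^2 ≠ 18*r + (-54) := by
      intro r hr
      have h3 : ((3:ℤ):ℚ) = ((1:ℤ):ℚ) * ((r-9)/3)^2 := by
        push_cast; linear_combination (-(1/9))*hr
      have := key_lemma 1 3 sf1 sf3 _ h3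
      norm_num at this
    obtain ⟨a, b, hab⟩ := mem_decomp x₀ 18 (-54)
      (by rw [eq_ratCast, eq_ratCast]; exact hx) (z : AlgebraicClosure ℚ) z.2
    rw [eq_ratCast, eq_ratCast] at hab
    rw [hab] at hz
    have huv : ((a^2 - 54*b^2 - 270*(d:ℚ) : ℚ) : AlgebraicClosure ℚ) +
        ((2*a*b + 18*b^2 - 54*(d:ℚ) : ℚ) : AlgebraicClosure ℚ) * x₀ = 0 := by
      push_cast at hx ⊢
      linear_combination hz - ((b:AlgebraicClosure ℚ)^2 - (d:AlgebraicClosure ℚ)*(x₀+19))*hx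
    obtain ⟨hu, hv⟩ := lin_indep 18 (-54) hnr x₀ hx _ _ huv
    have hfact : (a - 18*b)*(a + 8*b) = 0 := by linear_combination hu - 5*hv
    rcases mul_eq_zero.mp hfact with ha | ha
    · have hdb : (d:ℚ) = ((1:ℤ):ℚ) * b^2 := by
        push_cast; linear_combination (-(1/54))*hv + (b/27)*ha
      have hdd := key_lemma 1 d sf1 hd b hdb
      exact hdn (by rw [hdd]; simp)
    · have hdb : (d:ℚ) = ((3:ℤ):ℚ) * (b/9)^2 := by
        push_cast; linear_combination (-(1/54))*hv + (b/27)*ha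
      have hdd := key_lemma 3 d sf3 hd (b/9) hdb
      exact hdn (by rw [hdd]; simp)
  · -- x₁ = -18 : x₀² = -36x₀ + 378
    have hx18 : x₁ = -18 := by linear_combination h18
    have hq : (x₀^2 + 36*x₀ - 378)^2 = 0 := by
      linear_combination hkey + 4*(x₀^3 + x₀^2 - 234*x₀ + 1296)*hx18
    have hx : x₀^2 = ((-36:ℚ) : AlgebraicClosure ℚ)*x₀ + ((378:ℚ) : AlgebraicClosure ℚ) := by
      have h0 := (pow_eq_zero_iff two_ne_zero).mp hq
      push_cast
      linear_combination h0
    have hnr : ∀ r : ℚ, r^2 ≠ (-36)*r + 378 := by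
      intro r hr
      have h78 : ((78:ℤ):ℚ) = ((1:ℤ):ℚ) * ((r+18)/3)^2 := by
        push_cast; linear_combination (-(1/9))*hr
      have := key_lemma 1 78 sf1 sf78 _ h78
      norm_num at this
    obtain ⟨a, b, hab⟩ := mem_decomp x₀ (-36) 378
      (by rw [eq_ratCast, eq_ratCast]; exact hx) (z : AlgebraicClosure ℚ) z.2
    rw [eq_ratCast, eq_ratCast] at hab
    rw [hab] at hz
    have huv : ((a^2 + 378*b^2 + 11934*(d:ℚ) : ℚ) : AlgebraicClosure ℚ) +
        ((2*a*b - 36*b^2 - 1404*(d:ℚ) : ℚ) : AlgebraicClosure ℚ) * x₀ = 0 := by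
      push_cast at hx ⊢
      linear_combination hz - ((b:AlgebraicClosure ℚ)^2 - (d:AlgebraicClosure ℚ)*(x₀-35))*hx
    obtain ⟨hu, hv⟩ := lin_indep (-36) 378 hnr x₀ hx _ _ huv
    have hfact : (a + 8*b)*(a + 9*b) = 0 := by linear_combination hu + (17/2)*hv
    rcases mul_eq_zero.mp hfact with ha | ha
    · have hdb : (d:ℚ) = ((-3:ℤ):ℚ) * (b/9)^2 := by
        push_cast; linear_combination (-(1/1404))*hv + (b/702)*ha
      have hdd := key_lemma (-3) d sfm3 hd (b/9) hdb
      exact hdn (by rw [hdd]; simp)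
    · have hdb : (d:ℚ) = ((-26:ℤ):ℚ) * (b/26)^2 := by
        push_cast; linear_combination (-(1/1404))*hv + (b/702)*ha
      have hdd := key_lemma (-26) d sfm26 hd (b/26) hdb
      exact hdn (by rw [hdd]; simp)
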